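/- Let k ≥ 2 and n ∈ ℕ, and write n = qk + s with 0 ≤ s < k. Then the product ∏_{i=2}^{n} (t_k(i) − t_k(i−1)) of consecutive Turán-number differences equals (n − 1 − b)! · b! · (k−1)^b, where b = ⌊(n−1)/k⌋ and t_k(m) denotes the number of edges of the Turán graph T_k(m). -/

import Mathlib

open Finset SimpleGraph

/-- The number of edges of the Turán graph `T_k(m)`. -/
noncomputable def turanEdges (k m : ℕ) : ℕ := Nat.card (SimpleGraph.turanGraph m k).edgeSet

/-- Number of `v < m` with `v % k = m % k` is `m / k`. -/
lemma aux_count (k m : ℕ) (hk : 0 < k) :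
    #({v ∈ Finset.range m | v % k = m % k}) = m / k := by
  rw [← Finset.card_range (m / k)]
  apply Finset.card_nbij' (fun v => v / k) (fun j => m % k + k * j)
  · intro v hv
    simp only [Finset.mem_coe, Finset.mem_filter, Finset.mem_range] at hv ⊢
    obtain ⟨h1, h2⟩ := hv
    have e1 := Nat.div_add_mod v k
    have e2 := Nat.div_add_mod m k
    have h3 : k * (v / k) < k * (m / k) := by omega
    exact (Nat.mul_lt_mul_left hk).mp h3
  · intro j hj
    simp only [Finset.mem_coe, Finset.mem_range] at hj
    simp only [Finset.mem_coe, Finset.mem_filter, Finset.mem_range]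
    have h3 : k * j < k * (m / k) := (Nat.mul_lt_mul_left hk).mpr hj
    refine ⟨by have := Nat.div_add_mod m k; omega, ?_⟩
    rw [Nat.add_mul_mod_self_left, Nat.mod_mod_of_dvd m (dvd_refl k)]
  · intro v hv
    simp only [Finset.mem_coe, Finset.mem_filter, Finset.mem_range] at hv
    have := Nat.div_add_mod v k
    dsimp only
    omega
  · intro j hj
    simp only [Finset.mem_coe, Finset.mem_range] at hj
    dsimp only
    rw [Nat.add_mul_div_left _ _ hk, Nat.div_eq_of_lt (Nat.mod_lt _ hk), Nat.zero_add]

lemma two_mul_turanEdges (k m : ℕ) :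
    2 * turanEdges k m =
      ∑ v ∈ Finset.range m, ∑ w ∈ Finset.range m, if v % k ≠ w % k then 1 else 0 := by
  classical
  have h1 : turanEdges k m = #(SimpleGraph.turanGraph m k).edgeFinset := by
    rw [turanEdges, SimpleGraph.edgeFinset_card, Nat.card_eq_fintype_card]
  rw [h1, SimpleGraph.two_mul_card_edgeFinset]
  rw [Finset.card_filter]
  rw [← Finset.univ_product_univ, Finset.sum_product]
  rw [← Fin.sum_univ_eq_sum_range (fun v => ∑ w ∈ Finset.range m, if v % k ≠ w % k then 1 else 0)]
  apply Finset.sum_congr rfl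
  intro v _
  rw [← Fin.sum_univ_eq_sum_range (fun w => if (v : ℕ) % k ≠ w % k then 1 else 0)]
  apply Finset.sum_congr rfl
  intro w _
  simp [SimpleGraph.turanGraph]
  split_ifs <;> simp_all

lemma turanEdges_succ (k m : ℕ) (hk : 0 < k) :
    turanEdges k (m + 1) = turanEdges k m + (m - m / k) := by
  have hcnt : #({v ∈ Finset.range m | ¬ v % k = m % k}) = m - m / k := by
    have h1 := aux_count k m hk
    have h2 := Finset.card_filter_add_card_filter_not
      (s := Finset.range m) (p := fun v => v % k = m % k)
    rw [Finset.card_range] at h2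
    have hle : m / k ≤ m := Nat.div_le_self m k
    omega
  have hcnt1 : (∑ v ∈ Finset.range m, if v % k ≠ m % k then (1:ℕ) else 0) = m - m / k := by
    rw [← hcnt, Finset.card_filter]
  have hcnt2 : (∑ w ∈ Finset.range m, if m % k ≠ w % k then (1:ℕ) else 0) = m - m / k := by
    rw [← hcnt, Finset.card_filter]
    apply Finset.sum_congr rfl; intro w _; simp [ne_eq, eq_comm]
  have key : 2 * turanEdges k (m + 1) = 2 * turanEdges k m + 2 * (m - m / k) := by
    rw [two_mul_turanEdges, two_mul_turanEdges]
    calc ∑ v ∈ Finset.range (m+1), ∑ w ∈ Finset.range (m+1), (if v % k ≠ w % k then (1:ℕ) else 0)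
        = ∑ v ∈ Finset.range (m+1), ((∑ w ∈ Finset.range m, if v % k ≠ w % k then 1 else 0)
            + if v % k ≠ m % k then 1 else 0) := by
          apply Finset.sum_congr rfl; intro v _; rw [Finset.sum_range_succ]
      _ = (∑ v ∈ Finset.range m, ∑ w ∈ Finset.range m, if v % k ≠ w % k then 1 else 0)
            + (∑ w ∈ Finset.range m, if m % k ≠ w % k then 1 else 0)
            + ((∑ v ∈ Finset.range m, if v % k ≠ m % k then 1 else 0) + 0) := by
          rw [Finset.sum_add_distrib, Finset.sum_range_succ, Finset.sum_range_succ
            (fun v => if v % k ≠ m % k then (1:ℕ) else 0)]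
          simp
      _ = _ := by rw [hcnt1, hcnt2]; ring
  omega

theorem stmt15 (k n : ℕ) (hk : 2 ≤ k) :
    ∏ i ∈ Finset.Icc 2 n, (turanEdges k i - turanEdges k (i - 1)) =
      (n - 1 - (n - 1) / k).factorial * ((n - 1) / k).factorial * (k - 1) ^ ((n - 1) / k) := by
  have hk0 : 0 < k := by omega
  induction n with
  | zero => simp
  | succ n ih =>
    rcases Nat.eq_zero_or_pos n with rfl | hn
    · simp
    · rw [Finset.prod_Icc_succ_top (by omega : 2 ≤ n + 1), ih]
      have hterm : turanEdges k (n + 1) - turanEdges k (n + 1 - 1) = n - n / k := by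
        simp only [Nat.add_sub_cancel]
        rw [turanEdges_succ k n hk0]
        omega
      rw [hterm]
      simp only [Nat.add_sub_cancel]
      by_cases hd : k ∣ n
      · obtain ⟨q, rfl⟩ := hd
        have hq : q ≠ 0 := by rintro rfl; simp at hn
        obtain ⟨q', rfl⟩ : ∃ q', q = q' + 1 := ⟨q - 1, by omega⟩
        have e1 : k * (q' + 1) = k * q' + k := by ring
        have e2 : (q' + 1) * (k - 1) + (q' + 1) = (q' + 1) * k := by
          rw [← Nat.mul_succ]
          congr 1
          omega
        have e3 : (q' + 1) * k = k * q' + k := by ring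
        have hdiv1 : k * (q' + 1) / k = q' + 1 := Nat.mul_div_cancel_left _ hk0
        have hdiv2 : (k * (q' + 1) - 1) / k = q' := by
          rw [show k * (q' + 1) - 1 = (k - 1) + k * q' by omega]
          rw [Nat.add_mul_div_left _ _ hk0, Nat.div_eq_of_lt (by omega), Nat.zero_add]
        rw [hdiv1, hdiv2]
        have hY1 : k * (q' + 1) - 1 - q' = (q' + 1) * (k - 1) := by omega
        have hY2 : k * (q' + 1) - (q' + 1) = (q' + 1) * (k - 1) := by omega
        rw [hY1, hY2, Nat.factorial_succ, pow_succ]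
        ring
      · have hdiv : n / k = (n - 1) / k := by
          have h1 := Nat.succ_div (a := n - 1) (b := k)
          rw [show n - 1 + 1 = n by omega] at h1
          rw [h1, if_neg hd, Nat.add_zero]
        rw [← hdiv]
        have ha : n / k ≤ n - 1 := by rw [hdiv]; exact Nat.div_le_self _ _
        have hnd : 0 < n % k := Nat.emod_pos_of_not_dvd hd
        have hs : n - n / k = (n - 1 - n / k) + 1 := by omega
        rw [hs, Nat.factorial_succ, ← hs]
        ring
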